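/- arXiv:2206.14124 — 3 statements merged into one kernel-verified Lean document; each statement's English description precedes it below -/
import Mathlib

section
/- Let M be a Lie algebra over ℚ equipped with a filtration {F^n}_{n≥1}. If a, b, c ∈ M satisfy ⁅a,b⁆ = -2·b, ⁅a,c⁆ = 2·c and ⁅b,c⁆ = -a, then a, b, c ∈ F^n for every n ≥ 1. -/
/-- Let `M` be a Lie algebra over `ℚ` equipped with a filtration `{Fⁿ}_{n≥1}`
(a decreasing sequence of Lie ideals with `F¹ = M` and `⁅Fᵖ, Fᵠ⁆ ⊆ F^{p+q}`).
If `a, b, c ∈ M` satisfy `⁅a,b⁆ = -2•b`, `⁅a,c⁆ = 2•c` and `⁅b,c⁆ = -a`,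
then `a, b, c ∈ Fⁿ` for every `n ≥ 1`. -/
theorem stmt_0 {M : Type*} [LieRing M] [LieAlgebra ℚ M]
    (F : ℕ → LieIdeal ℚ M)
    (hF1 : F 1 = ⊤)
    (hdec : ∀ n, 1 ≤ n → F (n + 1) ≤ F n)
    (hbr : ∀ p q, 1 ≤ p → 1 ≤ q → ⁅F p, F q⁆ ≤ F (p + q))
    (a b c : M)
    (hab : ⁅a, b⁆ = (-2 : ℚ) • b)
    (hac : ⁅a, c⁆ = (2 : ℚ) • c)
    (hbc : ⁅b, c⁆ = -a) :
    ∀ n, 1 ≤ n → a ∈ F n ∧ b ∈ F n ∧ c ∈ F n := by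
  intro n hn
  induction n with
  | zero => omega
  | succ m ih =>
    rcases Nat.eq_or_lt_of_le hn with h1 | h1
    · rw [← h1, hF1]
      exact ⟨trivial, trivial, trivial⟩
    · have hm : 1 ≤ m := by omega
      obtain ⟨ha, hb, hc⟩ := ih hm
      have htop : ∀ x : M, x ∈ F 1 := fun x => hF1 ▸ trivial
      have key : ∀ x y : M, x ∈ F m → ⁅x, y⁆ ∈ F (m + 1) :=
        fun x y hx => hbr m 1 hm le_rfl (LieSubmodule.lie_mem_lie hx (htop y))
      refine ⟨?_, ?_, ?_⟩
      · have := key b c hb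
        rw [hbc] at this
        simpa using (F (m+1)).neg_mem this
      · have := key a b ha
        rw [hab] at this
        have := (F (m+1)).smul_mem (-(1:ℚ)/2) this
        simpa [smul_smul] using this
      · have := key a c ha
        rw [hac] at this
        have := (F (m+1)).smul_mem ((1:ℚ)/2) this
        simpa [smul_smul] using this
end

section
/- If M is a Lie algebra over ℚ equipped with a filtration {F^n}_{n≥1} satisfying ⋂_{n≥1} F^n = {0}, and a, b, c ∈ M satisfy ⁅a,b⁆ = -2·b, ⁅a,c⁆ = 2·c and ⁅b,c⁆ = -a, then a = b = c = 0. -/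
/-- If `M` is a Lie algebra over `ℚ` with a filtration `{Fⁿ}_{n≥1}`
(a decreasing sequence of Lie ideals with `F¹ = M` and `⁅Fᵖ, Fᵠ⁆ ⊆ F^{p+q}`)
satisfying `⋂_{n≥1} Fⁿ = 0`, and `a, b, c ∈ M` satisfy `⁅a,b⁆ = -2•b`,
`⁅a,c⁆ = 2•c` and `⁅b,c⁆ = -a`, then `a = b = c = 0`. -/
theorem stmt_1 {M : Type*} [LieRing M] [LieAlgebra ℚ M]
    (F : ℕ → LieIdeal ℚ M)
    (hF1 : F 1 = ⊤)
    (hdec : ∀ n, 1 ≤ n → F (n + 1) ≤ F n)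
    (hbr : ∀ p q, 1 ≤ p → 1 ≤ q → ⁅F p, F q⁆ ≤ F (p + q))
    (hinter : (⨅ n ≥ 1, F n) = ⊥)
    (a b c : M)
    (hab : ⁅a, b⁆ = (-2 : ℚ) • b)
    (hac : ⁅a, c⁆ = (2 : ℚ) • c)
    (hbc : ⁅b, c⁆ = -a) :
    a = 0 ∧ b = 0 ∧ c = 0 := by
  have key : ∀ n, 1 ≤ n → a ∈ F n ∧ b ∈ F n ∧ c ∈ F n := by
    intro n hn
    induction n with
    | zero => omega
    | succ m ih =>
      rcases eq_or_lt_of_le hn with h | h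
      · rw [← h, hF1]; exact ⟨trivial, trivial, trivial⟩
      · have hm : 1 ≤ m := by omega
        obtain ⟨ha, hb, hc⟩ := ih hm
        have hb1 : b ∈ F 1 := by rw [hF1]; trivial
        have hc1 : c ∈ F 1 := by rw [hF1]; trivial
        have hab' : ⁅a, b⁆ ∈ F (m + 1) :=
          hbr m 1 hm le_rfl (LieSubmodule.lie_mem_lie ha hb1)
        have hac' : ⁅a, c⁆ ∈ F (m + 1) :=
          hbr m 1 hm le_rfl (LieSubmodule.lie_mem_lie ha hc1)
        have hbc' : ⁅b, c⁆ ∈ F (m + 1) :=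
          hbr m 1 hm le_rfl (LieSubmodule.lie_mem_lie hb hc1)
        refine ⟨?_, ?_, ?_⟩
        · have := (F (m + 1)).neg_mem hbc'
          rwa [hbc, neg_neg] at this
        · have := (F (m + 1)).smul_mem (-(1/2) : ℚ) hab'
          rwa [hab, smul_smul, show (-(1/2) : ℚ) * (-2) = 1 by norm_num,
            one_smul] at this
        · have := (F (m + 1)).smul_mem ((1/2) : ℚ) hac'
          rwa [hac, smul_smul, show ((1/2) : ℚ) * 2 = 1 by norm_num,
            one_smul] at this
  have mem_bot : ∀ x : M, (∀ n, 1 ≤ n → x ∈ F n) → x = 0 := by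
    intro x hx
    have : x ∈ (⨅ n ≥ 1, F n : LieIdeal ℚ M) := by
      simp only [LieSubmodule.mem_iInf]
      exact hx
    rw [hinter] at this
    simpa using this
  exact ⟨mem_bot a fun n hn => (key n hn).1, mem_bot b fun n hn => (key n hn).2.1,
    mem_bot c fun n hn => (key n hn).2.2⟩
end

section
/- Let L be the free Lie algebra over ℚ on two generators x and y, and let θ₁, θ₂, θ₃ be the derivations of L determined by θ₁(x) = x, θ₁(y) = -y; θ₂(x) = y, θ₂(y) = 0; θ₃(x) = 0, θ₃(y) = x. For every filtration {F^n}_{n≥1} of the Lie algebra Der L of derivations of L, the elements θ₁, θ₂, θ₃ belong to F^n for all n ≥ 1; moreover θ₂ ≠ 0. Consequently ⋂_{n≥1} F^n ≠ {0}, i.e., no filtration of Der L has trivial intersection (so Der L is not complete with respect to any filtration). -/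
lemma lieSpan_range_of_top :
    LieSubalgebra.lieSpan ℚ (FreeLieAlgebra ℚ (Fin 2))
      (Set.range (FreeLieAlgebra.of ℚ)) = ⊤ := by
  set S := LieSubalgebra.lieSpan ℚ (FreeLieAlgebra ℚ (Fin 2))
      (Set.range (FreeLieAlgebra.of ℚ)) with hS
  rw [eq_top_iff]
  intro a _
  let f : Fin 2 → S := fun i =>
    ⟨FreeLieAlgebra.of ℚ i, LieSubalgebra.subset_lieSpan (Set.mem_range_self i)⟩
  let g := FreeLieAlgebra.lift ℚ f
  have key : S.incl.comp g = LieHom.id := by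
    apply FreeLieAlgebra.hom_ext
    intro x
    simp [g, f, FreeLieAlgebra.lift_of_apply, LieSubalgebra.coe_incl]
  have : S.incl (g a) = a := by
    have := congrArg (fun F => F a) key
    simpa using this
  rw [← this]
  exact (g a).2

lemma deriv_ext
    (D1 D2 : LieDerivation ℚ (FreeLieAlgebra ℚ (Fin 2)) (FreeLieAlgebra ℚ (Fin 2)))
    (h : ∀ i : Fin 2, D1 (FreeLieAlgebra.of ℚ i) = D2 (FreeLieAlgebra.of ℚ i)) :
    D1 = D2 := by
  apply LieDerivation.ext_of_lieSpan_eq_top _ lieSpan_range_of_top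
  rintro x ⟨i, rfl⟩
  exact h i

/-- Let `L` be the free Lie algebra over `ℚ` on two generators `x, y`, and let
`θ₁, θ₂, θ₃` be the derivations of `L` determined by `θ₁ x = x, θ₁ y = -y`;
`θ₂ x = y, θ₂ y = 0`; `θ₃ x = 0, θ₃ y = x`.  For every filtration `{Fⁿ}_{n≥1}` of the Lie
algebra `Der L`, the elements `θ₁, θ₂, θ₃` belong to `Fⁿ` for all `n ≥ 1`; moreover `θ₂ ≠ 0`.
Consequently `⋂_{n≥1} Fⁿ ≠ 0`, so no filtration of `Der L` has trivial intersection. -/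
theorem stmt_3
    (θ₁ θ₂ θ₃ : LieDerivation ℚ (FreeLieAlgebra ℚ (Fin 2)) (FreeLieAlgebra ℚ (Fin 2)))
    (h1x : θ₁ (FreeLieAlgebra.of ℚ (0 : Fin 2)) = FreeLieAlgebra.of ℚ (0 : Fin 2))
    (h1y : θ₁ (FreeLieAlgebra.of ℚ (1 : Fin 2)) = -FreeLieAlgebra.of ℚ (1 : Fin 2))
    (h2x : θ₂ (FreeLieAlgebra.of ℚ (0 : Fin 2)) = FreeLieAlgebra.of ℚ (1 : Fin 2))
    (h2y : θ₂ (FreeLieAlgebra.of ℚ (1 : Fin 2)) = 0)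
    (h3x : θ₃ (FreeLieAlgebra.of ℚ (0 : Fin 2)) = 0)
    (h3y : θ₃ (FreeLieAlgebra.of ℚ (1 : Fin 2)) = FreeLieAlgebra.of ℚ (0 : Fin 2))
    (F : ℕ → LieIdeal ℚ (LieDerivation ℚ (FreeLieAlgebra ℚ (Fin 2)) (FreeLieAlgebra ℚ (Fin 2))))
    (hF1 : F 1 = ⊤)
    (hdec : ∀ n, 1 ≤ n → F (n + 1) ≤ F n)
    (hbr : ∀ p q, 1 ≤ p → 1 ≤ q → ⁅F p, F q⁆ ≤ F (p + q)) :
    (∀ n, 1 ≤ n → θ₁ ∈ F n ∧ θ₂ ∈ F n ∧ θ₃ ∈ F n) ∧ θ₂ ≠ 0 ∧ (⨅ n ≥ 1, F n) ≠ ⊥ := by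
  -- bracket relations
  have b12 : ⁅θ₁, θ₂⁆ = (-2 : ℚ) • θ₂ := by
    apply deriv_ext
    intro i
    fin_cases i <;>
      simp [LieDerivation.commutator_apply, h1x, h1y, h2x, h2y, two_smul] <;> abel
  have b13 : ⁅θ₁, θ₃⁆ = (2 : ℚ) • θ₃ := by
    apply deriv_ext
    intro i
    fin_cases i <;>
      simp [LieDerivation.commutator_apply, h1x, h1y, h3x, h3y, two_smul]
  have b23 : ⁅θ₂, θ₃⁆ = (-1 : ℚ) • θ₁ := by
    apply deriv_ext
    intro i
    fin_cases i <;>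
      simp [LieDerivation.commutator_apply, h2x, h2y, h3x, h3y, h1x, h1y]
  -- main induction
  have main : ∀ n, 1 ≤ n → θ₁ ∈ F n ∧ θ₂ ∈ F n ∧ θ₃ ∈ F n := by
    intro n hn
    induction n with
    | zero => omega
    | succ m ih =>
      rcases Nat.eq_or_lt_of_le hn with h | h
      · rw [← h, hF1]
        exact ⟨trivial, trivial, trivial⟩
      · have hm : 1 ≤ m := by omega
        obtain ⟨i1, i2, i3⟩ := ih hm
        have top1 : θ₁ ∈ F 1 := hF1 ▸ trivial
        have top2 : θ₂ ∈ F 1 := hF1 ▸ trivial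
        have top3 : θ₃ ∈ F 1 := hF1 ▸ trivial
        refine ⟨?_, ?_, ?_⟩
        · have : ⁅θ₂, θ₃⁆ ∈ F (m + 1) :=
            hbr m 1 hm le_rfl (LieSubmodule.lie_mem_lie i2 top3)
          have h1 : θ₁ = (-1 : ℚ) • ⁅θ₂, θ₃⁆ := by rw [b23]; module
          rw [h1]; exact (F (m+1)).smul_mem _ this
        · have : ⁅θ₁, θ₂⁆ ∈ F (m + 1) :=
            hbr m 1 hm le_rfl (LieSubmodule.lie_mem_lie i1 top2)
          have h1 : θ₂ = (-1/2 : ℚ) • ⁅θ₁, θ₂⁆ := by rw [b12]; module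
          rw [h1]; exact (F (m+1)).smul_mem _ this
        · have : ⁅θ₁, θ₃⁆ ∈ F (m + 1) :=
            hbr m 1 hm le_rfl (LieSubmodule.lie_mem_lie i1 top3)
          have h1 : θ₃ = (1/2 : ℚ) • ⁅θ₁, θ₃⁆ := by rw [b13]; module
          rw [h1]; exact (F (m+1)).smul_mem _ this
  have hy_ne : FreeLieAlgebra.of ℚ (1 : Fin 2) ≠ 0 := by
    intro h
    letI : LieRing ℚ := LieRing.ofAssociativeRing
    have := congrArg (FreeLieAlgebra.lift ℚ (fun _ : Fin 2 => (1 : ℚ))) h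
    simp [FreeLieAlgebra.lift_of_apply] at this
  have hθ2 : θ₂ ≠ 0 := by
    intro h
    apply hy_ne
    rw [← h2x, h]
    simp
  refine ⟨main, hθ2, ?_⟩
  intro hbot
  have : θ₂ ∈ (⨅ n ≥ 1, F n) := by
    simp only [ge_iff_le, LieSubmodule.mem_iInf]
    exact fun n hn => (main n hn).2.1
  rw [hbot] at this
  exact hθ2 (by simpa using this)
end
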